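/- Let m be a nonnegative integer. Suppose that for each integer k with |k| ≤ m and k ≡ m (mod 2) we are given a polynomial function φ_k : ℂ → ℂ, and that these satisfy φ_k(λ) = φ_{−k}(−λ) for all such k and all λ ∈ ℂ, and φ_k(l) = φ_l(k) for all integers k, l with |k|, |l| ≤ m and k ≡ l ≡ m (mod 2). Then there exist polynomials h₀, h₁, …, h_m ∈ ℂ[X] such that φ_k(λ) = Σ_{l=0}^{m} h_l(λ² + k²) · (kλ)^l for all integers k with |k| ≤ m, k ≡ m (mod 2), and all λ ∈ ℂ. (In other words, ₘPol_m is a free Pol(ℂ)-module with the m+1 generators (kλ)^l, l = 0, …, m.) -/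

import Mathlib

open Polynomial

/-- even/odd decomposition of a polynomial. -/
lemma exists_even_odd (p : Polynomial ℂ) :
    ∃ e o : Polynomial ℂ, ∀ z : ℂ, p.eval z = e.eval (z^2) + z * o.eval (z^2) := by
  induction p using Polynomial.induction_on' with
  | add p q hp hq =>
    obtain ⟨e1, o1, h1⟩ := hp
    obtain ⟨e2, o2, h2⟩ := hq
    exact ⟨e1 + e2, o1 + o2, fun z => by simp [h1 z, h2 z]; ring⟩
  | monomial n c =>
    rcases Nat.even_or_odd n with ⟨i, hi⟩ | ⟨i, hi⟩
    · refine ⟨Polynomial.C c * X ^ i, 0, fun z => by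
        simp only [eval_monomial, eval_mul, eval_pow, eval_C, eval_X, eval_zero, hi, mul_zero, add_zero]; rw [← pow_mul]; ring_nf⟩
    · refine ⟨0, Polynomial.C c * X ^ i, fun z => by
        simp only [eval_monomial, eval_mul, eval_pow, eval_C, eval_X, eval_zero, hi, zero_add, eval_zero]; rw [← pow_mul]; ring_nf⟩

lemma core : ∀ (n : ℕ) (a : ℕ → ℂ) (g : ℕ → Polynomial ℂ),
    (∀ i j, i ≤ n → j ≤ n → a i = a j → i = j) →
    (∀ i j, i ≤ n → j ≤ n → (g i).eval (a j) = (g j).eval (a i)) →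
    ∃ h : ℕ → Polynomial ℂ, ∀ i, i ≤ n → ∀ t : ℂ,
      (g i).eval t = ∑ j ∈ Finset.range (n+1), (h j).eval (t + a i) * (a i * t)^j := by
  intro n
  induction n with
  | zero =>
    intro a g _ _
    refine ⟨fun _ => (g 0).comp (X - C (a 0)), ?_⟩
    intro i hi t
    interval_cases i
    simp [eval_comp]
  | succ n IH =>
    intro a g ha hg
    set D : ℕ → Polynomial ℂ := fun i =>
      (g (i+1)).comp (X - C (a (i+1))) - (g 0).comp (X - C (a 0)) with hDdef
    have hroot : ∀ i, i ≤ n → (D i).IsRoot (a (i+1) + a 0) := by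
      intro i hi
      have := hg (i+1) 0 (by omega) (by omega)
      simp only [IsRoot, hDdef, eval_sub, eval_comp, eval_X, eval_C]
      rw [show a (i+1) + a 0 - a (i+1) = a 0 by ring,
        show a (i+1) + a 0 - a 0 = a (i+1) by ring]
      rw [this]; ring
    set q : ℕ → Polynomial ℂ := fun i => D i /ₘ (X - C (a (i+1) + a 0)) with hqdef
    have hfact : ∀ i, i ≤ n → D i = (X - C (a (i+1) + a 0)) * q i := by
      intro i hi
      exact ((mul_divByMonic_eq_iff_isRoot).2 (hroot i hi)).symm
    set G' : ℕ → Polynomial ℂ := fun i => C ((a (i+1) - a 0)⁻¹) * q i with hG'def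
    have hane : ∀ i, i ≤ n → a (i+1) - a 0 ≠ 0 := by
      intro i hi hcon
      have : a (i+1) = a 0 := by linear_combination hcon
      have := ha (i+1) 0 (by omega) (by omega) this
      omega
    have hDeval : ∀ i, i ≤ n → ∀ s : ℂ,
        (g (i+1)).eval (s - a (i+1)) - (g 0).eval (s - a 0)
          = (a (i+1) - a 0) * (s - a (i+1) - a 0) * (G' i).eval s := by
      intro i hi s
      have h1 : (D i).eval s = (s - (a (i+1) + a 0)) * (q i).eval s := by
        rw [hfact i hi]; simp
      have h2 : (q i).eval s = (a (i+1) - a 0) * (G' i).eval s := by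
        simp only [hG'def, eval_mul, eval_C]
        field_simp [hane i hi]
      simp only [hDdef, eval_sub, eval_comp, eval_X, eval_C] at h1
      rw [h1, h2]; ring
    set g' : ℕ → Polynomial ℂ := fun i => (G' i).comp (X + C (a (i+1))) with hg'def
    have hg'eval : ∀ i, ∀ t : ℂ, (g' i).eval t = (G' i).eval (t + a (i+1)) := by
      intro i t; simp [hg'def, eval_comp]
    set a' : ℕ → ℂ := fun i => a (i+1) with ha'def
    have ha' : ∀ i j, i ≤ n → j ≤ n → a' i = a' j → i = j := by
      intro i j hi hj hij
      simp only [ha'def] at hij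
      have := ha (i+1) (j+1) (by omega) (by omega) hij
      omega
    have hg' : ∀ i j, i ≤ n → j ≤ n → (g' i).eval (a' j) = (g' j).eval (a' i) := by
      intro i j hi hj
      have e1 := hDeval i hi (a (i+1) + a (j+1))
      have e2 := hDeval j hj (a (i+1) + a (j+1))
      rw [show a (i+1) + a (j+1) - a (i+1) = a (j+1) by ring] at e1
      rw [show a (i+1) + a (j+1) - a (j+1) = a (i+1) by ring] at e2
      have esym : (g (i+1)).eval (a (j+1)) = (g (j+1)).eval (a (i+1)) :=
        hg (i+1) (j+1) (by omega) (by omega)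
      rw [hg'eval, hg'eval]
      have harg1 : a' j + a (i+1) = a (i+1) + a (j+1) := by simp only [ha'def]; ring
      have harg2 : a' i + a (j+1) = a (i+1) + a (j+1) := by simp only [ha'def]
      rw [harg1, harg2]
      have hA : (a (i+1) - a 0) * (a (j+1) - a 0) ≠ 0 :=
        mul_ne_zero (hane i hi) (hane j hj)
      have key : (a (i+1) - a 0) * (a (j+1) - a 0) *
          ((G' i).eval (a (i+1) + a (j+1)) - (G' j).eval (a (i+1) + a (j+1))) = 0 := by
        linear_combination e2 - e1 + esym
      exact sub_eq_zero.mp ((mul_eq_zero.mp key).resolve_left hA)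
    obtain ⟨h', hh'⟩ := IH a' g' ha' hg'
    have hIH : ∀ i, i ≤ n → ∀ s : ℂ, (G' i).eval s
        = ∑ j ∈ Finset.range (n+1), (h' j).eval s * (a (i+1) * (s - a (i+1)))^j := by
      intro i hi s
      have h0 := hh' i hi (s - a (i+1))
      rw [hg'eval] at h0
      simp only [ha'def] at h0
      rw [show s - a (i+1) + a (i+1) = s by ring] at h0
      exact h0
    set X0 : Polynomial ℂ := C (a 0) * (X - C (a 0)) with hX0def
    set H' : ℕ → Polynomial ℂ := fun j => if j < n+1 then h' j else 0 with hH'def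
    set hh : ℕ → Polynomial ℂ := fun j =>
      if j = 0 then (g 0).comp (X - C (a 0)) - X0 * h' 0
      else H' (j-1) - X0 * H' j with hhdef
    have hh0 : hh 0 = (g 0).comp (X - C (a 0)) - X0 * h' 0 := by
      simp only [hhdef, if_pos rfl]
    have hhs : ∀ j : ℕ, hh (j+1) = H' j - X0 * H' (j+1) := by
      intro j
      simp only [hhdef, if_neg (Nat.succ_ne_zero j), Nat.add_sub_cancel]
    refine ⟨hh, ?_⟩
    intro i hi t
    set s : ℂ := t + a i with hsdef
    set x : ℂ := a i * t with hxdef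
    set x0 : ℂ := a 0 * (s - a 0) with hx0def
    have hX0eval : X0.eval s = x0 := by simp [hX0def, hx0def]
    set Q : ℂ := ∑ j ∈ Finset.range (n+1), (h' j).eval s * x^j with hQdef
    have hsum : ∑ j ∈ Finset.range (n+1+1), (hh j).eval s * x^j
        = (g 0).eval (s - a 0) + (x - x0) * Q := by
      rw [Finset.sum_range_succ']
      have hterm : ∀ j, ((hh (j+1)).eval s) * x^(j+1)
          = (H' j).eval s * x^(j+1) - x0 * ((H' (j+1)).eval s * x^(j+1)) := by
        intro j
        rw [hhs j]
        simp only [eval_sub, eval_mul, hX0eval]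
        ring
      rw [Finset.sum_congr rfl (fun j _ => hterm j), Finset.sum_sub_distrib,
        ← Finset.mul_sum]
      have h1 : ∑ j ∈ Finset.range (n+1), (H' j).eval s * x^(j+1) = x * Q := by
        rw [hQdef, Finset.mul_sum]
        refine Finset.sum_congr rfl ?_
        intro j hj
        simp only [Finset.mem_range] at hj
        simp only [hH'def, if_pos hj]
        ring
      have h2 : ∑ j ∈ Finset.range (n+1), (H' (j+1)).eval s * x^(j+1)
          = Q - (h' 0).eval s := by
        have h3 := Finset.sum_range_succ' (fun j => (H' j).eval s * x^j) (n+1)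
        have htop : ∑ j ∈ Finset.range (n+1+1), (H' j).eval s * x^j = Q := by
          rw [Finset.sum_range_succ]
          have hz : H' (n+1) = 0 := by simp only [hH'def]; simp
          rw [hz, hQdef]
          simp only [eval_zero, zero_mul, add_zero]
          refine Finset.sum_congr rfl ?_
          intro j hj
          simp only [Finset.mem_range] at hj
          rw [hH'def]; simp only [if_pos hj]
        rw [htop] at h3
        have h00 : (H' 0).eval s * x^0 = (h' 0).eval s := by
          rw [hH'def]; simp
        rw [h00] at h3
        linear_combination -h3
      rw [h1, h2, hh0]
      simp only [eval_sub, eval_mul, hX0eval, eval_comp, eval_X, eval_C]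
      ring
    have hgoal : ∑ j ∈ Finset.range (n+1+1), (hh j).eval (t + a i) * (a i * t)^j
        = (g 0).eval (s - a 0) + (x - x0) * Q := hsum
    rw [hgoal]
    rcases Nat.eq_zero_or_pos i with rfl | hipos
    · have hx0x : x = x0 := by rw [hxdef, hx0def, hsdef]; ring
      rw [hx0x, show (s - a 0) = t by rw [hsdef]; ring]
      ring
    · obtain ⟨i', rfl⟩ : ∃ i', i = i' + 1 := ⟨i - 1, by omega⟩
      have hi' : i' ≤ n := by omega
      have hQG : Q = (G' i').eval s := by
        rw [hQdef, hIH i' hi' s]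
        refine Finset.sum_congr rfl fun j _ => ?_
        rw [hxdef, hsdef]
        ring_nf
      have hxx0 : x - x0 = (a (i'+1) - a 0) * (s - a (i'+1) - a 0) := by
        rw [hxdef, hx0def, hsdef]; ring
      rw [hQG, hxx0, ← hDeval i' hi' s]
      rw [show s - a (i'+1) = t by rw [hsdef]; ring]
      ring

lemma sum_range_split (f : ℕ → ℂ) : ∀ N, ∑ l ∈ Finset.range N, f l
    = ∑ j ∈ Finset.range ((N+1)/2), f (2*j) + ∑ j ∈ Finset.range (N/2), f (2*j+1) := by
  intro N
  induction N with
  | zero => simp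
  | succ N ih =>
    rw [Finset.sum_range_succ, ih]
    rcases Nat.even_or_odd N with ⟨a, hA⟩ | ⟨a, hA⟩
    · rw [show (N+1+1)/2 = a+1 by omega, show (N+1)/2 = a by omega,
        show N/2 = a by omega, Finset.sum_range_succ, show 2*a = N by omega]
      ring
    · rw [show (N+1+1)/2 = a+1 by omega, show (N+1)/2 = a+1 by omega,
        show N/2 = a by omega, Finset.sum_range_succ (fun j => f (2*j+1)) a, show 2*a+1 = N by omega]
      ring

lemma natsq_inj (x y : ℕ) (h : ((x:ℂ))^2 = ((y:ℂ))^2) : x = y := by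
  rcases sq_eq_sq_iff_eq_or_eq_neg.mp h with h1 | h1
  · exact_mod_cast h1
  · have : ((x + y : ℕ) : ℂ) = 0 := by push_cast; linear_combination h1
    have := Nat.cast_eq_zero.mp this
    omega

/-- `ₘPol_m` is a free `Pol(ℂ)`-module with generators `(kλ)^l`,
`l = 0, …, m` (existence part): every symmetric tuple `(φ_k)` of polynomial functions
(indexed by the integers `k` with `|k| ≤ m`, `k ≡ m (mod 2)`) satisfying
`φ_k(λ) = φ_{-k}(-λ)` and `φ_k(l) = φ_l(k)` admits a representation
`φ_k(λ) = Σ_{l=0}^{m} h_l(λ² + k²)·(kλ)^l` with `h_0, …, h_m ∈ ℂ[X]`. -/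
theorem stmt_7 (m : ℕ) (φ : ℤ → ℂ → ℂ)
    (hpoly : ∀ k : ℤ, k.natAbs ≤ m → k % 2 = (m : ℤ) % 2 →
      ∃ p : Polynomial ℂ, ∀ z : ℂ, φ k z = p.eval z)
    (hsym : ∀ k : ℤ, k.natAbs ≤ m → k % 2 = (m : ℤ) % 2 → ∀ z : ℂ, φ k z = φ (-k) (-z))
    (hint : ∀ k l : ℤ, k.natAbs ≤ m → l.natAbs ≤ m →
      k % 2 = (m : ℤ) % 2 → l % 2 = (m : ℤ) % 2 → φ k (l : ℂ) = φ l (k : ℂ)) :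
    ∃ h : Fin (m + 1) → Polynomial ℂ,
      ∀ k : ℤ, k.natAbs ≤ m → k % 2 = (m : ℤ) % 2 → ∀ z : ℂ,
        φ k z = ∑ l : Fin (m + 1),
          (h l).eval (z ^ 2 + (k : ℂ) ^ 2) * ((k : ℂ) * z) ^ (l : ℕ) := by
  set ε : ℕ := m % 2 with hεdef
  set n : ℕ := m / 2 with hndef
  have hm : m = 2*n + ε := by omega
  set K : ℕ → ℤ := fun r => ((2*r + ε : ℕ) : ℤ) with hKdef
  set c : ℕ → ℂ := fun r => ((2*r + ε : ℕ) : ℂ) with hcdef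
  have hKc : ∀ r : ℕ, ((K r : ℤ) : ℂ) = c r := by
    intro r; simp [hKdef, hcdef]
  have hKabs : ∀ r : ℕ, r ≤ n → (K r).natAbs ≤ m := by
    intro r hr; simp [hKdef]; omega
  have hKmod : ∀ r : ℕ, (K r) % 2 = (m:ℤ) % 2 := by
    intro r; simp [hKdef]; omega
  have hEO : ∀ r : ℕ, ∃ eo : Polynomial ℂ × Polynomial ℂ, r ≤ n →
      ∀ z : ℂ, φ (K r) z = eo.1.eval (z^2) + z * eo.2.eval (z^2) := by
    intro r
    by_cases hr : r ≤ n
    · obtain ⟨p, hp⟩ := hpoly (K r) (hKabs r hr) (hKmod r)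
      obtain ⟨e, o, heo⟩ := exists_even_odd p
      exact ⟨(e, o), fun _ z => by rw [hp z, heo z]⟩
    · exact ⟨(0,0), fun h => absurd h hr⟩
  choose eo he using hEO
  set E : ℕ → Polynomial ℂ := fun r => (eo r).1 with hEdef
  set O : ℕ → Polynomial ℂ := fun r => (eo r).2 with hOdef
  have hcne : ∀ r : ℕ, 1 ≤ 2*r + ε → c r ≠ 0 := by
    intro r h
    simp only [hcdef, ne_eq, Nat.cast_eq_zero]
    omega
  have key : ∀ r r' : ℕ, r ≤ n → r' ≤ n →
      (E r).eval ((c r')^2) = (E r').eval ((c r)^2) ∧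
      c r' * (O r).eval ((c r')^2) = c r * (O r').eval ((c r)^2) := by
    intro r r' hr hr'
    have h1 := he r hr (c r')
    have h2 := he r hr (-(c r'))
    rw [neg_sq] at h2
    have h3 := he r' hr' (c r)
    have h4 := he r' hr' (-(c r))
    rw [neg_sq] at h4
    have hA : φ (K r) (c r') = φ (K r') (c r) := by
      have := hint (K r) (K r') (hKabs r hr) (hKabs r' hr') (hKmod r) (hKmod r')
      rwa [hKc, hKc] at this
    have hB : φ (K r) (-(c r')) = φ (K r') (-(c r)) := by
      have hs1 : φ (K r) (-(c r')) = φ (-(K r)) (c r') := by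
        have hscall := hsym (K r) (hKabs r hr) (hKmod r) (-(c r'))
        rwa [neg_neg] at hscall
      have habs : (-(K r)).natAbs ≤ m := by rw [Int.natAbs_neg]; exact hKabs r hr
      have hmod : (-(K r)) % 2 = (m:ℤ)%2 := by have := hKmod r; omega
      have hs2 := hint (-(K r)) (K r') habs (hKabs r' hr') hmod (hKmod r')
      rw [hKc] at hs2
      have hcast : ((-(K r) : ℤ) : ℂ) = -(c r) := by rw [Int.cast_neg, hKc]
      rw [hcast] at hs2
      rw [hs1, hs2]
    constructor
    · linear_combination (hA + hB + h3 + h4 - h1 - h2)/2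
    · linear_combination (hA - hB + h3 - h4 - h1 + h2)/2
  have hainj : ∀ r r' : ℕ, (c r)^2 = (c r')^2 → r = r' := by
    intro r r' h
    simp only [hcdef] at h
    have := natsq_inj _ _ h
    omega
  obtain ⟨hE, hEcore⟩ := core n (fun r => (c r)^2) E
    (fun i j _ _ hij => hainj i j hij)
    (fun i j hi hj => (key i j hi hj).1)
  have hEcore' : ∀ i, i ≤ n → ∀ t : ℂ, (E i).eval t
      = ∑ j ∈ Finset.range (n+1), (hE j).eval (t + (c i)^2) * ((c i)^2 * t)^j := hEcore
  have hOall : ∃ hO : ℕ → Polynomial ℂ, ∀ r, r ≤ n → 1 ≤ 2*r + ε → ∀ t : ℂ,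
      (O r).eval t = (c r) * ∑ j ∈ Finset.range (n + ε),
        (hO j).eval (t + (c r)^2) * ((c r)^2 * t)^j := by
    have hε01 : ε = 0 ∨ ε = 1 := by omega
    rcases hε01 with hε0 | hε1
    · rcases Nat.eq_zero_or_pos n with hn0 | hnpos
      · exact ⟨fun _ => 0, fun r hr h1 => by omega⟩
      · obtain ⟨n', hn'⟩ : ∃ n', n = n' + 1 := ⟨n-1, by omega⟩
        have hinj2 : ∀ i j, i ≤ n' → j ≤ n' → (c (i+1))^2 = (c (j+1))^2 → i = j := by
          intro i j _ _ hij
          have := hainj _ _ hij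
          omega
        have hcond2 : ∀ i j, i ≤ n' → j ≤ n' →
            (C ((c (i+1))⁻¹) * O (i+1)).eval ((c (j+1))^2)
              = (C ((c (j+1))⁻¹) * O (j+1)).eval ((c (i+1))^2) := by
          intro i j hi hj
          rw [eval_mul, eval_C, eval_mul, eval_C]
          have hk := (key (i+1) (j+1) (by omega) (by omega)).2
          have hci : c (i+1) ≠ 0 := hcne _ (by omega)
          have hcj : c (j+1) ≠ 0 := hcne _ (by omega)
          field_simp
          linear_combination hk
        obtain ⟨hO, hOc⟩ := core n' (fun r => (c (r+1))^2)
          (fun r => C ((c (r+1))⁻¹) * O (r+1)) hinj2 hcond2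
        have hOc' : ∀ i, i ≤ n' → ∀ t : ℂ, (c (i+1))⁻¹ * (O (i+1)).eval t
            = ∑ j ∈ Finset.range (n'+1), (hO j).eval (t + (c (i+1))^2) * ((c (i+1))^2 * t)^j := by
          intro i hi t
          have h := hOc i hi t
          rwa [eval_mul, eval_C] at h
        refine ⟨hO, ?_⟩
        intro r hr h1 t
        obtain ⟨r', rfl⟩ : ∃ r', r = r' + 1 := ⟨r-1, by omega⟩
        have h := hOc' r' (by omega) t
        have hcne' : c (r'+1) ≠ 0 := hcne _ (by omega)
        rw [show n+ε = n'+1 by omega, ← h]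
        field_simp
    · have hcond2 : ∀ i j, i ≤ n → j ≤ n →
          (C ((c i)⁻¹) * O i).eval ((c j)^2) = (C ((c j)⁻¹) * O j).eval ((c i)^2) := by
        intro i j hi hj
        rw [eval_mul, eval_C, eval_mul, eval_C]
        have hk := (key i j hi hj).2
        have hci : c i ≠ 0 := hcne _ (by omega)
        have hcj : c j ≠ 0 := hcne _ (by omega)
        field_simp
        linear_combination hk
      obtain ⟨hO, hOc⟩ := core n (fun r => (c r)^2)
        (fun r => C ((c r)⁻¹) * O r) (fun i j _ _ hij => hainj i j hij) hcond2
      have hOc' : ∀ i, i ≤ n → ∀ t : ℂ, (c i)⁻¹ * (O i).eval t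
          = ∑ j ∈ Finset.range (n+1), (hO j).eval (t + (c i)^2) * ((c i)^2 * t)^j := by
        intro i hi t
        have h := hOc i hi t
        rwa [eval_mul, eval_C] at h
      refine ⟨hO, ?_⟩
      intro r hr h1 t
      have h := hOc' r hr t
      have hcne' : c r ≠ 0 := hcne _ (by omega)
      rw [show n+ε = n+1 by omega, ← h]
      field_simp
  obtain ⟨hO, hOc⟩ := hOall
  set hfun : ℕ → Polynomial ℂ := fun l => if l % 2 = 0 then hE (l/2) else hO (l/2) with hfdef
  have hodd0 : ε = 0 → ∀ z : ℂ, z * (O 0).eval (z^2) = 0 := by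
    intro hε0 z
    have h1 := he 0 (by omega) z
    have h2 := he 0 (by omega) (-z)
    rw [neg_sq] at h2
    have hK0 : K 0 = 0 := by simp [hKdef, hε0]
    have hsym0 := hsym (K 0) (hKabs 0 (by omega)) (hKmod 0) z
    rw [hK0, neg_zero] at hsym0
    rw [hK0] at h1 h2
    linear_combination (hsym0 + h2 - h1)/2
  have main : ∀ r : ℕ, r ≤ n → ∀ z : ℂ,
      φ (K r) z = ∑ l : Fin (m+1), (hfun (l:ℕ)).eval (z^2 + (c r)^2) * ((c r) * z)^(l:ℕ) := by
    intro r hr z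
    have hfin : ∑ l : Fin (m+1), (hfun (l:ℕ)).eval (z^2 + (c r)^2) * ((c r) * z)^(l:ℕ)
        = ∑ l ∈ Finset.range (m+1), (hfun l).eval (z^2 + (c r)^2) * ((c r) * z)^l :=
      Fin.sum_univ_eq_sum_range (fun l => (hfun l).eval (z^2 + (c r)^2) * ((c r) * z)^l) (m+1)
    have hsplit := sum_range_split
      (fun l => (hfun l).eval (z^2 + (c r)^2) * ((c r) * z)^l) (m+1)
    rw [show (m+1+1)/2 = n+1 by omega, show (m+1)/2 = n+ε by omega] at hsplit
    have heven : ∑ j ∈ Finset.range (n+1),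
        (hfun (2*j)).eval (z^2+(c r)^2) * ((c r)*z)^(2*j) = (E r).eval (z^2) := by
      rw [hEcore' r hr (z^2)]
      refine Finset.sum_congr rfl fun j _ => ?_
      have hf : hfun (2*j) = hE j := by
        simp [hfdef, Nat.mul_div_cancel_left]
      rw [hf, pow_mul]
      ring
    have hoddsum : ∑ j ∈ Finset.range (n+ε),
        (hfun (2*j+1)).eval (z^2+(c r)^2) * ((c r)*z)^(2*j+1) = z * (O r).eval (z^2) := by
      have hf : ∀ j, hfun (2*j+1) = hO j := by
        intro j
        simp [hfdef, Nat.mul_add_mod, Nat.mul_add_div]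
      by_cases h1 : 1 ≤ 2*r + ε
      · rw [hOc r hr h1 (z^2), Finset.mul_sum, Finset.mul_sum]
        refine Finset.sum_congr rfl fun j _ => ?_
        rw [hf j]
        ring
      · have hr0 : r = 0 := by omega
        have hε0 : ε = 0 := by omega
        subst hr0
        rw [hodd0 hε0 z]
        refine Finset.sum_eq_zero fun j _ => ?_
        have hc0 : c 0 = 0 := by simp [hcdef, hε0]
        rw [hc0, zero_mul, zero_pow (by omega : 2*j+1 ≠ 0), mul_zero]
    rw [hfin, hsplit, heven, hoddsum]
    exact he r hr z
  -- final wrap-up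
  refine ⟨fun l => hfun (l:ℕ), ?_⟩
  intro k hk1 hk2 z
  rcases le_or_gt 0 k with hk0 | hk0
  · obtain ⟨r, hr, hkr⟩ : ∃ r, r ≤ n ∧ k = K r := by
      refine ⟨k.toNat/2, by omega, ?_⟩
      simp only [hKdef]
      omega
    subst hkr
    rw [hKc]
    exact main r hr z
  · have habs : (-k).natAbs ≤ m := by rw [Int.natAbs_neg]; exact hk1
    have hmod : (-k) % 2 = (m:ℤ)%2 := by omega
    obtain ⟨r, hr, hkr⟩ : ∃ r, r ≤ n ∧ -k = K r := by
      refine ⟨(-k).toNat/2, by omega, ?_⟩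
      simp only [hKdef]
      omega
    rw [hsym k hk1 hk2 z]
    have hmm := main r hr (-z)
    rw [← hkr] at hmm
    have hc : c r = -(k:ℂ) := by
      rw [← hKc r, ← hkr]
      push_cast
      ring
    rw [hc] at hmm
    rw [hmm]
    refine Finset.sum_congr rfl fun l _ => ?_
    simp only [neg_sq, neg_mul_neg]
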